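/- If a multipartite tournament contains an m-Duke in some partite set F, then F contains a non-eclipsed m-Duke. Moreover, if some vertex c is pecked by an m-Duke, then c is pecked by a non-eclipsed m-Duke. -/
import Mathlib


/-- An orientation of a complete multipartite graph: vertices `V`, partite sets
given as fibers of `part : V → ι`, and `peck` the arc relation. Between any two
vertices in different partite sets there is exactly one arc, and there are no
arcs within a partite set. -/
structure MTour (V : Type*) (ι : Type*) where
  part : V → ι
  peck : V → V → Prop
  complete : ∀ u v, part u ≠ part v → peck u v ∨ peck v u
  inter : ∀ u v, peck u v → part u ≠ part v
  asymm : ∀ u v, peck u v → ¬ peck v u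

namespace MTour

variable {V ι : Type*}

/-- There is a directed path of length at most `m` from `d` to `c`. -/
def hasPath (T : MTour V ι) (m : ℕ) (d c : V) : Prop :=
  ∃ k ≤ m, ∃ f : ℕ → V, f 0 = d ∧ f k = c ∧ ∀ i < k, T.peck (f i) (f (i + 1))

/-- `d` is an `m`-Duke: every vertex in a different partite set is reachable
from `d` by a directed path of length at most `m`. -/
def isDuke (T : MTour V ι) (m : ℕ) (d : V) : Prop :=
  ∀ c, T.part c ≠ T.part d → T.hasPath m d c

/-- `d` is an `m`-King: every other vertex is reachable from `d` by a directed
path of length at most `m`. -/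
def isKing (T : MTour V ι) (m : ℕ) (d : V) : Prop :=
  ∀ c, c ≠ d → T.hasPath m d c

/-- The out-degree of a vertex. -/
noncomputable def outDeg (T : MTour V ι) (v : V) : ℕ :=
  Nat.card {w // T.peck v w}

/-- `e` eclipses `d`: same partite set, `e` pecks everything `d` pecks, and
at least one vertex `d` does not peck. -/
def eclipses (T : MTour V ι) (e d : V) : Prop :=
  T.part e = T.part d ∧ (∀ c, T.peck d c → T.peck e c) ∧ ∃ c, T.peck e c ∧ ¬ T.peck d c

/-- `d` is non-eclipsed: no vertex of its partite set eclipses it. -/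
def nonEclipsed (T : MTour V ι) (d : V) : Prop :=
  ∀ e, ¬ T.eclipses e d

/-- Partite set `i` dominates partite set `j`: some vertex of `i` pecks all of `j`. -/
def Dominates (T : MTour V ι) (i j : ι) : Prop :=
  ∃ v, T.part v = i ∧ ∀ w, T.part w = j → T.peck v w

end MTour

/-- If some partite set contains an `m`-Duke, it contains a non-eclipsed
`m`-Duke; moreover any vertex pecked by an `m`-Duke is pecked by a
non-eclipsed `m`-Duke. -/
theorem stmt9_key {V ι : Type*} [Finite V] (T : MTour V ι) (m : ℕ) (d : V)
    (hd : T.isDuke m d) :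
    ∃ e, T.part e = T.part d ∧ T.isDuke m e ∧ T.nonEclipsed e ∧
      ∀ c, T.peck d c → T.peck e c := by
  set S : Set V := {e | T.part e = T.part d ∧ ∀ c, T.peck d c → T.peck e c} with hS
  have hdS : d ∈ S := ⟨rfl, fun c h => h⟩
  have : Nonempty S := ⟨⟨d, hdS⟩⟩
  obtain ⟨⟨e, heS⟩, hmax⟩ :=
    Finite.exists_max (fun e : S => Set.ncard {c | T.peck e.1 c})
  refine ⟨e, heS.1, ?_, ?_, heS.2⟩
  · intro c hc
    obtain ⟨k, hk, f, hf0, hfk, hstep⟩ := hd c (by rw [heS.1] at hc; exact hc)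
    rcases Nat.eq_zero_or_pos k with h0 | hpos
    · exfalso; apply hc; rw [heS.1]; subst h0; rw [← hf0, hfk]
    · refine ⟨k, hk, fun i => if i = 0 then e else f i, by simp, ?_, ?_⟩
      · simpa [hpos.ne'] using hfk
      · intro i hi
        rcases Nat.eq_zero_or_pos i with h0 | hip
        · subst h0
          simpa using heS.2 _ (hf0 ▸ hstep 0 hpos)
        · simp only [hip.ne', if_false, Nat.succ_ne_zero]
          exact hstep i hi
  · rintro e' ⟨hpart, hsub, c, hc1, hc2⟩
    have he'S : e' ∈ S := ⟨hpart.trans heS.1, fun x hx => hsub x (heS.2 x hx)⟩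
    have hss : {x | T.peck e x} ⊂ {x | T.peck e' x} :=
      ⟨fun x hx => hsub x hx, fun h => hc2 (h hc1)⟩
    have := Set.ncard_lt_ncard hss (Set.toFinite _)
    exact absurd (hmax ⟨e', he'S⟩) (by simpa using this.not_ge)

theorem stmt9 {V ι : Type*} [Finite V] (T : MTour V ι) (m : ℕ) :
    (∀ d, T.isDuke m d →
      ∃ e, T.part e = T.part d ∧ T.isDuke m e ∧ T.nonEclipsed e) ∧
    (∀ d c, T.isDuke m d → T.peck d c →
      ∃ e, T.isDuke m e ∧ T.nonEclipsed e ∧ T.peck e c) := by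
  constructor
  · intro d hd
    obtain ⟨e, h1, h2, h3, _⟩ := stmt9_key T m d hd
    exact ⟨e, h1, h2, h3⟩
  · intro d c hd hdc
    obtain ⟨e, _, h2, h3, h4⟩ := stmt9_key T m d hd
    exact ⟨e, h2, h3, h4 c hdc⟩
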